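/- Let $X$ be a Banach space and $f : [a,b] \to X$ differentiable with Bochner-integrable derivative $f'$. For any $x_1 \le x_2$ in $[a,b]$ and weights $p_1, p_2 > 0$ with $p_1 + p_2 = 1$: $p_1 f(x_1) + p_2 f(x_2) - \frac{1}{b-a}\int_a^b f(t)\,dt = \frac{1}{b-a}\left[\int_a^{x_1} (t-a) f'(t)\,dt + \int_{x_1}^{x_2} \big(t - (p_1 b + p_2 a)\big) f'(t)\,dt + \int_{x_2}^b (t-b) f'(t)\,dt\right]$. -/

import Mathlib

open MeasureTheory intervalIntegral

lemma ii_smul_cont {X : Type*} [NormedAddCommGroup X] [NormedSpace ℝ X]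
    {g : ℝ → X} {u v : ℝ} (hg : IntervalIntegrable g volume u v) {φ : ℝ → ℝ}
    (hφ : Continuous φ) : IntervalIntegrable (fun t => φ t • g t) volume u v := by
  rw [intervalIntegrable_iff] at hg ⊢
  have h1 : IntegrableOn g (Set.uIcc u v) volume := by
    rw [Set.uIcc, integrableOn_Icc_iff_integrableOn_Ioc]
    exact hg
  exact (h1.continuousOn_smul hφ.continuousOn isCompact_uIcc).mono_set
    Set.Ioc_subset_Icc_self

lemma parts_aux {X : Type*} [NormedAddCommGroup X] [NormedSpace ℝ X] [CompleteSpace X]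
    {a b : ℝ} {f f' : ℝ → X}
    (hderiv : ∀ t ∈ Set.Icc a b, HasDerivAt f (f' t) t)
    (hint : IntervalIntegrable f' volume a b)
    {u v α : ℝ} (hau : a ≤ u) (huv : u ≤ v) (hvb : v ≤ b) :
    ∫ t in u..v, (t - α) • f' t =
      (v - α) • f v - (u - α) • f u - ∫ t in u..v, f t := by
  have hab : a ≤ b := le_trans (le_trans hau huv) hvb
  have hsub : Set.uIcc u v ⊆ Set.Icc a b := by
    rw [Set.uIcc_of_le huv]
    exact Set.Icc_subset_Icc hau hvb
  have hf'i : IntervalIntegrable f' volume u v :=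
    hint.mono_set (by rw [Set.uIcc_of_le hab]; exact hsub)
  have hfi : IntervalIntegrable f volume u v :=
    (ContinuousOn.mono (fun t ht => (hderiv t ht).continuousAt.continuousWithinAt)
      hsub).intervalIntegrable
  have hsmuli : IntervalIntegrable (fun t => (t - α) • f' t) volume u v :=
    ii_smul_cont hf'i (continuous_id.sub continuous_const)
  have hF : ∀ t ∈ Set.uIcc u v,
      HasDerivAt (fun s => (s - α) • f s) (f t + (t - α) • f' t) t := by
    intro t ht
    have h1 : HasDerivAt (fun s : ℝ => s - α) 1 t := (hasDerivAt_id t).sub_const α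
    have := h1.smul (hderiv t (hsub ht))
    exact this.congr_deriv (by rw [one_smul, add_comm])
  have := integral_eq_sub_of_hasDerivAt hF
    ((hfi.add hsmuli).congr (fun _ _ => rfl))
  rw [integral_add hfi hsmuli] at this
  have h2 : (∫ t in u..v, f t) + (∫ t in u..v, (t - α) • f' t) =
      (v - α) • f v - (u - α) • f u := this
  linear_combination (norm := abel) h2

theorem stmt4 {X : Type*} [NormedAddCommGroup X] [NormedSpace ℝ X] [CompleteSpace X]
    {a b : ℝ} (hab : a < b) {f f' : ℝ → X}
    (hderiv : ∀ t ∈ Set.Icc a b, HasDerivAt f (f' t) t)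
    (hint : IntervalIntegrable f' volume a b) {x₁ x₂ p₁ p₂ : ℝ} (hx₁ : a ≤ x₁) (hx₁₂ : x₁ ≤ x₂) (hx₂ : x₂ ≤ b)
    (hp₁ : 0 < p₁) (hp₂ : 0 < p₂) (hp : p₁ + p₂ = 1) :
    p₁ • f x₁ + p₂ • f x₂ - (b - a)⁻¹ • (∫ t in a..b, f t) =
      (b - a)⁻¹ • ((∫ t in a..x₁, (t - a) • f' t) +
        (∫ t in x₁..x₂, (t - (p₁ * b + p₂ * a)) • f' t) +
        (∫ t in x₂..b, (t - b) • f' t)) := by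
  have hab' : a ≤ b := hab.le
  have hba : b - a ≠ 0 := sub_ne_zero.mpr hab.ne'
  have hcont : ContinuousOn f (Set.Icc a b) :=
    fun t ht => (hderiv t ht).continuousAt.continuousWithinAt
  have hfi : ∀ u v, a ≤ u → u ≤ v → v ≤ b → IntervalIntegrable f volume u v := by
    intro u v hu huv hv
    exact (hcont.mono (by rw [Set.uIcc_of_le huv]; exact Set.Icc_subset_Icc hu hv)).intervalIntegrable
  have hI : (∫ t in a..b, f t) =
      (∫ t in a..x₁, f t) + (∫ t in x₁..x₂, f t) + (∫ t in x₂..b, f t) := by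
    rw [integral_add_adjacent_intervals (hfi a x₁ le_rfl hx₁ (hx₁₂.trans hx₂))
      (hfi x₁ x₂ hx₁ hx₁₂ hx₂),
      integral_add_adjacent_intervals (hfi a x₂ le_rfl (hx₁.trans hx₁₂) hx₂)
      (hfi x₂ b (hx₁.trans hx₁₂) hx₂ le_rfl)]
  rw [parts_aux hderiv hint le_rfl hx₁ (hx₁₂.trans hx₂),
    parts_aux hderiv hint hx₁ hx₁₂ hx₂,
    parts_aux hderiv hint (hx₁.trans hx₁₂) hx₂ le_rfl, hI]
  have hp₂' : p₂ = 1 - p₁ := by linarith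
  subst hp₂'
  match_scalars <;> field_simp <;> ring
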